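/- arXiv:0805.3477 — 2 statements merged into one kernel-verified Lean document; each statement's English description precedes it below -/
import Mathlib

section
/- Two irrational numbers σ, ρ ∈ (0,1) have continued fraction expansions with the same tail (i.e., there exist indices p, q such that a_{p+n}(σ) = a_{q+n}(ρ) for all n ≥ 1) if and only if there exist integers ι, λ, μ, ν with ιν − λμ = ±1 such that σ = (ιρ + λ)/(μρ + ν). -/
/-- The Gauss map: `x ↦ 1/x - ⌊1/x⌋`. -/
noncomputable def gaussMap (x : ℝ) : ℝ := Int.fract (1 / x)

/-- The `(n+1)`-st partial quotient of the continued fraction expansion of `σ`. -/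
noncomputable def cfq (σ : ℝ) (n : ℕ) : ℤ := ⌊1 / (gaussMap^[n] σ)⌋

open Set Function

lemma gauss_mem {x : ℝ} (hx : x ∈ Set.Ioo (0:ℝ) 1) (hi : Irrational x) :
    gaussMap x ∈ Set.Ioo (0:ℝ) 1 ∧ Irrational (gaussMap x) := by
  obtain ⟨h0, h1⟩ := hx
  have hinv : Irrational (1 / x) := by
    rw [one_div]; exact hi.inv
  have hgi : Irrational (gaussMap x) := by
    unfold gaussMap
    rw [Int.fract]
    exact hinv.sub_intCast _
  refine ⟨⟨?_, ?_⟩, hgi⟩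
  · rcases lt_or_eq_of_le (Int.fract_nonneg (1/x)) with h | h
    · exact h
    · exact absurd h.symm (by simpa [gaussMap] using hgi.ne_zero)
  · exact Int.fract_lt_one _

lemma cfq_zero_ge {x : ℝ} (hx : x ∈ Set.Ioo (0:ℝ) 1) : 1 ≤ cfq x 0 := by
  obtain ⟨h0, h1⟩ := hx
  have : (1:ℝ) ≤ 1 / x := by
    rw [le_div_iff₀ h0]; linarith
  simpa [cfq, one_div] using Int.le_floor.2 (by rw [← one_div]; exact_mod_cast this)

lemma one_div_eq {x : ℝ} : 1 / x = (cfq x 0 : ℝ) + gaussMap x := by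
  simp [cfq, gaussMap, Int.floor_add_fract]

lemma iter_mem {x : ℝ} (hx : x ∈ Set.Ioo (0:ℝ) 1) (hi : Irrational x) (n : ℕ) :
    gaussMap^[n] x ∈ Set.Ioo (0:ℝ) 1 ∧ Irrational (gaussMap^[n] x) := by
  induction n with
  | zero => exact ⟨hx, hi⟩
  | succ n ih =>
    rw [Function.iterate_succ_apply']
    exact gauss_mem ih.1 ih.2

lemma cfq_ge_one {x : ℝ} (hx : x ∈ Set.Ioo (0:ℝ) 1) (hi : Irrational x) (n : ℕ) :
    1 ≤ cfq x n := by
  have h := iter_mem hx hi n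
  have := cfq_zero_ge h.1
  simpa [cfq] using this

lemma cfq_shift (x : ℝ) (p n : ℕ) : cfq (gaussMap^[p] x) n = cfq x (p + n) := by
  simp [cfq, Nat.add_comm p n, Function.iterate_add_apply]

lemma iter_step {x : ℝ} (hx : x ∈ Set.Ioo (0:ℝ) 1) (hi : Irrational x) (n : ℕ) :
    gaussMap^[n] x = 1 / ((cfq x n : ℝ) + gaussMap^[n+1] x) := by
  have h := iter_mem hx hi n
  have h1 : 1 / (gaussMap^[n] x) = (cfq x n : ℝ) + gaussMap^[n+1] x := by
    have := one_div_eq (x := gaussMap^[n] x)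
    rw [cfq_shift x n 0] at this
    rw [this, Function.iterate_succ_apply']
    norm_num
  rw [← h1, one_div_one_div]

noncomputable def conv (x : ℝ) : ℕ → ℤ × ℤ × ℤ × ℤ
  | 0 => (1, 0, 0, 1)
  | n+1 =>
    let p := conv x n
    (p.2.1, p.1 + cfq x n * p.2.1, p.2.2.2, p.2.2.1 + cfq x n * p.2.2.2)

noncomputable def cA (x : ℝ) (n : ℕ) : ℤ := (conv x n).1
noncomputable def cB (x : ℝ) (n : ℕ) : ℤ := (conv x n).2.1
noncomputable def cC (x : ℝ) (n : ℕ) : ℤ := (conv x n).2.2.1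
noncomputable def cD (x : ℝ) (n : ℕ) : ℤ := (conv x n).2.2.2

@[simp] lemma cA_zero (x : ℝ) : cA x 0 = 1 := rfl
@[simp] lemma cB_zero (x : ℝ) : cB x 0 = 0 := rfl
@[simp] lemma cC_zero (x : ℝ) : cC x 0 = 0 := rfl
@[simp] lemma cD_zero (x : ℝ) : cD x 0 = 1 := rfl
@[simp] lemma cA_succ (x : ℝ) (n : ℕ) : cA x (n+1) = cB x n := rfl
@[simp] lemma cB_succ (x : ℝ) (n : ℕ) : cB x (n+1) = cA x n + cfq x n * cB x n := rfl
@[simp] lemma cC_succ (x : ℝ) (n : ℕ) : cC x (n+1) = cD x n := rfl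
@[simp] lemma cD_succ (x : ℝ) (n : ℕ) : cD x (n+1) = cC x n + cfq x n * cD x n := rfl

lemma conv_nonneg {x : ℝ} (hx : x ∈ Set.Ioo (0:ℝ) 1) (hi : Irrational x) (n : ℕ) :
    0 ≤ cA x n ∧ 0 ≤ cB x n ∧ 0 ≤ cC x n ∧ 1 ≤ cD x n := by
  induction n with
  | zero => simp
  | succ n ih =>
    have hk := cfq_ge_one hx hi n
    obtain ⟨ha, hb, hc, hd⟩ := ih
    refine ⟨hb, ?_, le_trans (by norm_num) hd, ?_⟩ <;> simp only [cB_succ, cD_succ] <;> nlinarith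

lemma conv_det {x : ℝ} (n : ℕ) :
    cA x n * cD x n - cB x n * cC x n = 1 ∨ cA x n * cD x n - cB x n * cC x n = -1 := by
  induction n with
  | zero => simp
  | succ n ih => rcases ih with h | h <;> simp only [cA_succ, cB_succ, cC_succ, cD_succ]
                 · right; linarith [h]; 
                 · left; linarith [h]

lemma cD_mono {x : ℝ} (hx : x ∈ Set.Ioo (0:ℝ) 1) (hi : Irrational x) (n : ℕ) :
    cD x n ≤ cD x (n+1) := by
  have hk := cfq_ge_one hx hi n
  have h := conv_nonneg hx hi n
  simp only [cD_succ]
  nlinarith [h.2.2.1, h.2.2.2]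

lemma cD_growth {x : ℝ} (hx : x ∈ Set.Ioo (0:ℝ) 1) (hi : Irrational x) (m : ℕ) :
    (m : ℤ) + 1 ≤ cD x (2 * m) := by
  induction m with
  | zero => simp
  | succ m ih =>
    have hk := cfq_ge_one hx hi (2*m+1)
    have hk2 := cfq_ge_one hx hi (2*m)
    have h2 := conv_nonneg hx hi (2*m)
    have he : 2 * (m+1) = (2*m+1)+1 := by ring
    rw [he]
    simp only [cD_succ, cC_succ]
    push_cast
    have h3 : 1 ≤ cC x (2*m) + cfq x (2*m) * cD x (2*m) := by nlinarith [h2.2.2.1, h2.2.2.2]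
    nlinarith [h2.2.2.1, h2.2.2.2, mul_le_mul hk h3 (by norm_num) (by positivity)]

lemma conv_eq {x : ℝ} (hx : x ∈ Set.Ioo (0:ℝ) 1) (hi : Irrational x) (n : ℕ) :
    0 < (cC x n : ℝ) * gaussMap^[n] x + cD x n ∧
      x = ((cA x n : ℝ) * gaussMap^[n] x + cB x n) / ((cC x n : ℝ) * gaussMap^[n] x + cD x n) := by
  induction n with
  | zero => simp
  | succ n ih =>
    obtain ⟨hpos, heq⟩ := ih
    set y := gaussMap^[n] x with hy
    set t := gaussMap^[n+1] x with ht
    have hmem := iter_mem hx hi (n+1)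
    have ht0 : 0 < t := hmem.1.1
    have hk : (1:ℝ) ≤ (cfq x n : ℝ) := by exact_mod_cast cfq_ge_one hx hi n
    have hK : 0 < (cfq x n : ℝ) + t := by linarith
    have hystep : y = 1 / ((cfq x n : ℝ) + t) := iter_step hx hi n
    set a := (cA x n : ℝ); set b := (cB x n : ℝ); set c := (cC x n : ℝ); set d := (cD x n : ℝ)
    have hden : (cC x (n+1) : ℝ) * t + (cD x (n+1) : ℝ) = ((cfq x n : ℝ) + t) * (c * y + d) := by
      simp only [cC_succ, cD_succ]
      push_cast
      rw [hystep]
      field_simp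
      ring
    have hnum : (cA x (n+1) : ℝ) * t + (cB x (n+1) : ℝ) = ((cfq x n : ℝ) + t) * (a * y + b) := by
      simp only [cA_succ, cB_succ]
      push_cast
      rw [hystep]
      field_simp
      ring
    constructor
    · rw [hden]; exact mul_pos hK hpos
    · rw [hden, hnum, mul_div_mul_left _ _ (ne_of_gt hK)]
      exact heq

lemma conv_congr {x y : ℝ} (h : ∀ n, cfq x n = cfq y n) : ∀ n, conv x n = conv y n := by
  intro n
  induction n with
  | zero => rfl
  | succ n ih => simp only [conv, ih, h n]

lemma cfq_inj {x y : ℝ} (hx : x ∈ Set.Ioo (0:ℝ) 1) (hxi : Irrational x)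
    (hy : y ∈ Set.Ioo (0:ℝ) 1) (hyi : Irrational y)
    (h : ∀ n, cfq x n = cfq y n) : x = y := by
  by_contra hne
  have habs : 0 < |x - y| := abs_pos.2 (sub_ne_zero.2 hne)
  obtain ⟨m, hm⟩ := exists_nat_gt (1 / |x - y|)
  set n := 2 * m with hn
  obtain ⟨hpx, hex⟩ := conv_eq hx hxi n
  obtain ⟨hpy, hey⟩ := conv_eq hy hyi n
  have hcc := conv_congr h n
  have hcA : cA x n = cA y n := by unfold cA; rw [hcc]
  have hcB : cB x n = cB y n := by unfold cB; rw [hcc]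
  have hcC : cC x n = cC y n := by unfold cC; rw [hcc]
  have hcD : cD x n = cD y n := by unfold cD; rw [hcc]
  set u := gaussMap^[n] x
  set v := gaussMap^[n] y
  simp only [← hcA, ← hcB, ← hcC, ← hcD] at hey hpy
  have hx1 : (cA x n : ℝ) * u + (cB x n : ℝ) = x * ((cC x n : ℝ) * u + (cD x n : ℝ)) :=
    (div_eq_iff (ne_of_gt hpx)).mp hex.symm
  have hy1 : (cA x n : ℝ) * v + (cB x n : ℝ) = y * ((cC x n : ℝ) * v + (cD x n : ℝ)) :=
    (div_eq_iff (ne_of_gt hpy)).mp hey.symm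
  have key : (x - y) * (((cC x n : ℝ) * u + (cD x n : ℝ)) * ((cC x n : ℝ) * v + (cD x n : ℝ)))
      = ((cA x n * cD x n - cB x n * cC x n : ℤ) : ℝ) * (u - v) := by
    push_cast
    nlinarith [hx1, hy1]
  have hdet : |((cA x n * cD x n - cB x n * cC x n : ℤ) : ℝ)| = 1 := by
    rcases conv_det (x := x) n with hd | hd <;> rw [hd] <;> norm_num
  have hu := iter_mem hx hxi n
  have hv := iter_mem hy hyi n
  have huv : |u - v| ≤ 1 := by
    rw [abs_le]
    constructor <;> [linarith [hu.1.1, hv.1.2]; linarith [hu.1.2, hv.1.1]]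
  have hd_big : ((m : ℝ) + 1) ≤ (cD x n : ℝ) := by exact_mod_cast cD_growth hx hxi m
  have hc0 : (0:ℝ) ≤ (cC x n : ℝ) := by exact_mod_cast (conv_nonneg hx hxi n).2.2.1
  have hden1 : (m : ℝ) + 1 ≤ (cC x n : ℝ) * u + (cD x n : ℝ) := by nlinarith [hu.1.1]
  have hden2 : (m : ℝ) + 1 ≤ (cC x n : ℝ) * v + (cD x n : ℝ) := by nlinarith [hv.1.1]
  have keyabs : |x - y| * (((cC x n : ℝ) * u + (cD x n : ℝ)) * ((cC x n : ℝ) * v + (cD x n : ℝ)))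
      = |u - v| := by
    have h2 := congrArg abs key
    rwa [abs_mul, abs_of_pos (mul_pos hpx hpy), abs_mul, hdet, one_mul] at h2
  have hm1 : 1 < |x - y| * ((m:ℝ) + 1) := by
    rw [div_lt_iff₀ habs] at hm
    nlinarith
  have hmpos : (0:ℝ) < (m:ℝ) + 1 := by positivity
  nlinarith [keyabs, huv, hm1,
    mul_le_mul_of_nonneg_left (mul_le_mul hden1 hden2 hmpos.le (by linarith)) habs.le]

lemma det_mul {a b c d e f g h : ℤ}
    (h1 : a*d - b*c = 1 ∨ a*d - b*c = -1) (h2 : e*h - f*g = 1 ∨ e*h - f*g = -1) :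
    (a*e+b*g)*(c*f+d*h) - (a*f+b*h)*(c*e+d*g) = 1 ∨
      (a*e+b*g)*(c*f+d*h) - (a*f+b*h)*(c*e+d*g) = -1 := by
  have key : (a*e+b*g)*(c*f+d*h) - (a*f+b*h)*(c*e+d*g) = (a*d - b*c) * (e*h - f*g) := by ring
  rcases h1 with h1 | h1 <;> rcases h2 with h2 | h2 <;> rw [key, h1, h2] <;> norm_num

lemma mobius_comp {x y z : ℝ} {a b c d e f g h : ℤ}
    (hxy : x = ((a:ℝ)*y + b)/((c:ℝ)*y + d)) (hden1 : (c:ℝ)*y + d ≠ 0)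
    (hyz : y = ((e:ℝ)*z + f)/((g:ℝ)*z + h)) (hden2 : (g:ℝ)*z + h ≠ 0) :
    x = (((a*e+b*g : ℤ):ℝ)*z + ((a*f+b*h:ℤ):ℝ))/(((c*e+d*g:ℤ):ℝ)*z + ((c*f+d*h:ℤ):ℝ)) ∧
      ((c*e+d*g:ℤ):ℝ)*z + ((c*f+d*h:ℤ):ℝ) ≠ 0 := by
  have hy1 : (e:ℝ)*z + f = y * ((g:ℝ)*z + h) := (div_eq_iff hden2).mp hyz.symm
  have hden : ((c*e+d*g:ℤ):ℝ)*z + ((c*f+d*h:ℤ):ℝ) = ((c:ℝ)*y + d) * ((g:ℝ)*z + h) := by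
    push_cast
    linear_combination (c:ℝ) * hy1
  have hnum : ((a*e+b*g:ℤ):ℝ)*z + ((a*f+b*h:ℤ):ℝ) = ((a:ℝ)*y + b) * ((g:ℝ)*z + h) := by
    push_cast
    linear_combination (a:ℝ) * hy1
  constructor
  · rw [hnum, hden, mul_div_mul_right _ _ hden2]
    exact hxy
  · rw [hden]
    exact mul_ne_zero hden1 hden2

lemma mobius_inv {x y : ℝ} {a b c d : ℤ}
    (hdet : a*d - b*c = 1 ∨ a*d - b*c = -1)
    (hx : x = ((a:ℝ)*y + b)/((c:ℝ)*y + d)) (hden : (c:ℝ)*y + d ≠ 0) :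
    y = ((d:ℝ)*x + ((-b : ℤ):ℝ))/(((-c : ℤ):ℝ)*x + a) ∧ ((-c : ℤ):ℝ)*x + a ≠ 0 ∧
      (d*a - (-b)*(-c) = 1 ∨ d*a - (-b)*(-c) = -1) := by
  have hx1 : (a:ℝ)*y + b = x * ((c:ℝ)*y + d) := (div_eq_iff hden).mp hx.symm
  have hden' : ((-c : ℤ):ℝ)*x + a ≠ 0 := by
    intro hc
    push_cast at hc
    have hax : (a:ℝ) = c * x := by linarith
    have hbx : (b:ℝ) = d * x := by
      linear_combination hx1 - y * hax
    have : ((a*d - b*c : ℤ):ℝ) = 0 := by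
      push_cast
      rw [hax, hbx]; ring
    rcases hdet with hd | hd <;> rw [hd] at this <;> norm_num at this
  refine ⟨?_, hden', ?_⟩
  · rw [eq_div_iff hden']
    push_cast
    linear_combination hx1
  · rcases hdet with hd | hd
    · exact Or.inl (by linarith)
    · exact Or.inr (by linarith)
lemma rel_iter {x : ℝ} (hx : x ∈ Set.Ioo (0:ℝ) 1) (hi : Irrational x) (p : ℕ) :
    ∃ a b c d : ℤ, (a*d - b*c = 1 ∨ a*d - b*c = -1) ∧
      ((c:ℝ) * gaussMap^[p] x + d ≠ 0) ∧
      x = ((a:ℝ) * gaussMap^[p] x + b)/((c:ℝ) * gaussMap^[p] x + d) := by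
  induction p with
  | zero =>
    exact ⟨1, 0, 0, 1, by norm_num, by norm_num, by norm_num⟩
  | succ p ih =>
    obtain ⟨a, b, c, d, hdet, hden, heq⟩ := ih
    set y := gaussMap^[p+1] x with hy
    have hmem := iter_mem hx hi (p+1)
    have hk : 1 ≤ cfq x p := cfq_ge_one hx hi p
    have hstep : gaussMap^[p] x = (((0:ℤ):ℝ) * y + ((1:ℤ):ℝ))/(((1:ℤ):ℝ) * y + ((cfq x p : ℤ):ℝ)) := by
      push_cast
      rw [iter_step hx hi p, ← hy]
      rw [zero_mul, one_mul, zero_add, add_comm]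
    have hden2 : ((1:ℤ):ℝ) * y + ((cfq x p : ℤ):ℝ) ≠ 0 := by
      push_cast
      have : (1:ℝ) ≤ (cfq x p : ℝ) := by exact_mod_cast hk
      nlinarith [hmem.1.1]
    have hdet2 : (0:ℤ)*(cfq x p) - 1*1 = 1 ∨ (0:ℤ)*(cfq x p) - 1*1 = -1 := by norm_num
    obtain ⟨heq', hden'⟩ := mobius_comp heq hden hstep hden2
    exact ⟨_, _, _, _, det_mul hdet hdet2, hden', heq'⟩

lemma forward_dir {σ ρ : ℝ} (hσ : σ ∈ Set.Ioo (0:ℝ) 1) (hρ : ρ ∈ Set.Ioo (0:ℝ) 1)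
    (hσi : Irrational σ) (hρi : Irrational ρ)
    (h : ∃ p q : ℕ, ∀ n : ℕ, 1 ≤ n → cfq σ (p + n) = cfq ρ (q + n)) :
    ∃ ι lam μ ν : ℤ, (ι * ν - lam * μ = 1 ∨ ι * ν - lam * μ = -1) ∧
      (μ:ℝ) * ρ + (ν:ℝ) ≠ 0 ∧ σ = ((ι:ℝ) * ρ + (lam:ℝ)) / ((μ:ℝ) * ρ + (ν:ℝ)) := by
  obtain ⟨p, q, h⟩ := h
  have hττ : gaussMap^[p+1] σ = gaussMap^[q+1] ρ := by
    apply cfq_inj (iter_mem hσ hσi (p+1)).1 (iter_mem hσ hσi (p+1)).2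
      (iter_mem hρ hρi (q+1)).1 (iter_mem hρ hρi (q+1)).2
    intro m
    rw [cfq_shift σ (p+1) m, cfq_shift ρ (q+1) m,
      show p + 1 + m = p + (1 + m) by omega, show q + 1 + m = q + (1 + m) by omega]
    exact h (1 + m) (by omega)
  obtain ⟨a, b, c, d, hdet1, hden1, heq1⟩ := rel_iter hσ hσi (p+1)
  obtain ⟨e, f, g, k, hdet2, hden2, heq2⟩ := rel_iter hρ hρi (q+1)
  rw [hττ] at heq1 hden1
  obtain ⟨hinv_eq, hinv_den, hinv_det⟩ := mobius_inv hdet2 heq2 hden2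
  obtain ⟨hc_eq, hc_den⟩ := mobius_comp heq1 hden1 hinv_eq hinv_den
  exact ⟨_, _, _, _, det_mul hdet1 hinv_det, hc_den, hc_eq⟩

lemma conv_det_abs {x : ℝ} (n : ℕ) :
    |((cA x n * cD x n - cB x n * cC x n : ℤ):ℝ)| = 1 := by
  rcases conv_det (x := x) n with hd | hd <;> rw [hd] <;> norm_num

lemma conv_err {x : ℝ} (hx : x ∈ Set.Ioo (0:ℝ) 1) (hxi : Irrational x) (n : ℕ) :
    |(cD x n : ℝ) * x - (cB x n : ℝ)| ≤ 1 := by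
  obtain ⟨hpos, heq⟩ := conv_eq hx hxi n
  set t := gaussMap^[n] x
  have hmem := iter_mem hx hxi n
  have h1 : (cA x n : ℝ) * t + (cB x n : ℝ) = x * ((cC x n : ℝ) * t + (cD x n : ℝ)) :=
    (div_eq_iff (ne_of_gt hpos)).mp heq.symm
  have key : ((cD x n : ℝ) * x - (cB x n : ℝ)) * ((cC x n : ℝ) * t + (cD x n : ℝ))
      = ((cA x n * cD x n - cB x n * cC x n : ℤ):ℝ) * t := by
    push_cast
    linear_combination (-(cD x n : ℝ)) * h1
  have habs : |(cD x n : ℝ) * x - (cB x n : ℝ)| * ((cC x n : ℝ) * t + (cD x n : ℝ)) = t := by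
    have h2 := congrArg abs key
    rwa [abs_mul, abs_of_pos hpos, abs_mul, conv_det_abs, one_mul,
      abs_of_pos hmem.1.1] at h2
  have hd1 : (1:ℝ) ≤ (cD x n : ℝ) := by exact_mod_cast (conv_nonneg hx hxi n).2.2.2
  have hc0 : (0:ℝ) ≤ (cC x n : ℝ) := by exact_mod_cast (conv_nonneg hx hxi n).2.2.1
  nlinarith [habs, hmem.1.2, hmem.1.1, abs_nonneg ((cD x n : ℝ) * x - (cB x n : ℝ))]

set_option maxHeartbeats 1600000 in
lemma serret_key : ∀ s : ℕ, ∀ A B C D : ℤ, ∀ σ t : ℝ,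
    (C + D).toNat ≤ s →
    Irrational σ → σ ∈ Set.Ioo (0:ℝ) 1 → Irrational t → t ∈ Set.Ioo (0:ℝ) 1 →
    (A*D - B*C = 1 ∨ A*D - B*C = -1) →
    0 ≤ A → 1 ≤ B → A ≤ C → B ≤ D →
    σ = ((A:ℝ) * t + B) / ((C:ℝ) * t + D) →
    ∃ k j : ℕ, gaussMap^[k] σ = gaussMap^[j] t := by
  intro s
  induction s with
  | zero =>
    intro A B C D σ t hs _ _ _ _ hdet hA hB hAC hBD _
    exfalso
    have h1 : 1 ≤ C + D := by
      rcases le_or_gt 1 C with h | h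
      · linarith
      · have hC0 : C = 0 := by omega
        have hA0 : A = 0 := by omega
        rw [hA0, hC0] at hdet
        simp at hdet
    omega
  | succ s ih =>
    intro A B C D σ t hs hσi hσ hti ht hdet hA hB hAC hBD heq
    obtain ⟨hσ0, hσ1⟩ := hσ
    obtain ⟨ht0, ht1⟩ := ht
    have hC1 : (1:ℤ) ≤ C := by
      by_contra hc
      have hC0 : C = 0 := by omega
      have hA0 : A = 0 := by omega
      rw [hA0, hC0] at hdet
      simp at hdet
    have hD1 : (1:ℤ) ≤ D := by linarith
    have hCR : (1:ℝ) ≤ (C:ℝ) := by exact_mod_cast hC1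
    have hDR : (1:ℝ) ≤ (D:ℝ) := by exact_mod_cast hD1
    have hAR : (0:ℝ) ≤ (A:ℝ) := by exact_mod_cast hA
    have hBR : (1:ℝ) ≤ (B:ℝ) := by exact_mod_cast hB
    have hf : (0:ℝ) < (C:ℝ)*t + D := by nlinarith
    have he : (0:ℝ) < (A:ℝ)*t + B := by nlinarith
    have hinv : 1/σ = ((C:ℝ)*t + D)/((A:ℝ)*t + B) := by rw [heq, one_div_div]
    by_cases hA0 : A = 0
    · -- base case : matrix (0 1 / 1 D), σ = 1/(t+D)
      subst hA0
      have hBC : B * C = 1 := by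
        rcases hdet with h | h
        · exfalso; nlinarith
        · linarith
      have hB1 : B = 1 := by nlinarith
      have hC1' : C = 1 := by nlinarith
      subst hB1; subst hC1'
      have hiσ : 1/σ = t + (D:ℝ) := by
        rw [hinv]; push_cast; ring_nf
      refine ⟨1, 0, ?_⟩
      simp only [Function.iterate_one, Function.iterate_zero, id]
      rw [gaussMap, hiσ, Int.fract_add_intCast, Int.fract_eq_self.2 ⟨le_of_lt ht0, ht1⟩]
    · have hA1 : (1:ℤ) ≤ A := by omega
      have hA1R : (1:ℝ) ≤ (A:ℝ) := by exact_mod_cast hA1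
      set m := ⌊1/σ⌋ with hm
      have hm_le : (m:ℝ) ≤ 1/σ := Int.floor_le _
      have hm_lt : 1/σ < (m:ℝ) + 1 := Int.lt_floor_add_one _
      have hm1 : (1:ℤ) ≤ m := by
        apply Int.le_floor.2
        rw [le_div_iff₀ hσ0]
        push_cast
        linarith
      have hm1R : (1:ℝ) ≤ (m:ℝ) := by exact_mod_cast hm1
      have hR1 : (m:ℝ) * ((A:ℝ)*t + B) ≤ (C:ℝ)*t + D := by
        rw [hinv] at hm_le
        exact (le_div_iff₀ he).mp hm_le
      have hR2 : (C:ℝ)*t + D < ((m:ℝ)+1) * ((A:ℝ)*t+B) := by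
        rw [hinv] at hm_lt
        exact (div_lt_iff₀ he).mp hm_lt
      -- the four integer claims
      have hclaims : m*B ≤ D ∧ m*A ≤ C ∧ C ≤ (m+1)*A ∧ D ≤ (m+1)*B := by
        rcases hdet with hd | hd
        · have hdR : (A:ℝ)*D - (B:ℝ)*C = 1 := by exact_mod_cast hd
          have hbf : (B:ℝ)*((C:ℝ)*t+D) < (D:ℝ)*((A:ℝ)*t+B) := by
            have h0 : (0:ℝ) < t * ((A:ℝ)*D - (B:ℝ)*C) := mul_pos ht0 (by rw [hdR]; norm_num)
            nlinarith [h0]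
          have hc1R : (m:ℝ)*B < D := by
            nlinarith [mul_le_mul_of_nonneg_left hR1 (by linarith : (0:ℝ) ≤ (B:ℝ))]
          have hc1 : m*B ≤ D - 1 := by
            have h' : m*B < D := by exact_mod_cast hc1R
            linarith [Int.lt_iff_add_one_le.mp h']
          have haf : (C:ℝ)*((A:ℝ)*t+B) < (A:ℝ)*((C:ℝ)*t+D) := by nlinarith [hdR, hBR, hCR, ht0, ht1]
          have hc3R : (C:ℝ) < ((m:ℝ)+1)*A := by
            nlinarith [mul_le_mul_of_nonneg_left (le_of_lt hR2) hAR]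
          have hc3 : C + 1 ≤ (m+1)*A := by
            have h' : C < (m+1)*A := by exact_mod_cast hc3R
            linarith [Int.lt_iff_add_one_le.mp h']
          have e1 : m*B*A ≤ (D-1)*A := mul_le_mul_of_nonneg_right hc1 hA
          have e2 : (C - m*A)*B ≥ 0 := by nlinarith [e1, hd, hA1]
          have hc2 : m*A ≤ C := by nlinarith [e2, hB]
          have e3 : (C+1)*B ≤ (m+1)*A*B := mul_le_mul_of_nonneg_right hc3 (by linarith)
          have e4 : ((m+1)*B - D)*A ≥ 0 := by nlinarith [e3, hd, hB]
          have hc4 : D ≤ (m+1)*B := by nlinarith [e4, hA1]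
          exact ⟨by linarith, hc2, by linarith, hc4⟩
        · have hdR : (B:ℝ)*C - (A:ℝ)*D = 1 := by
            have h0 : ((B*C - A*D : ℤ):ℝ) = 1 := by rw [show B*C - A*D = 1 by linarith]; norm_num
            push_cast at h0
            linarith
          have hbf : (D:ℝ)*((A:ℝ)*t+B) < (B:ℝ)*((C:ℝ)*t+D) := by
            have h0 : (0:ℝ) < t * ((B:ℝ)*C - (A:ℝ)*D) := mul_pos ht0 (by rw [hdR]; norm_num)
            nlinarith [h0]
          have hc4R : (D:ℝ) < ((m:ℝ)+1)*B := by
            nlinarith [mul_le_mul_of_nonneg_left (le_of_lt hR2) (by linarith : (0:ℝ) ≤ (B:ℝ))]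
          have hc4 : D + 1 ≤ (m+1)*B := by
            have h' : D < (m+1)*B := by exact_mod_cast hc4R
            linarith [Int.lt_iff_add_one_le.mp h']
          have haf : (A:ℝ)*((C:ℝ)*t+D) < (C:ℝ)*((A:ℝ)*t+B) := by nlinarith [hdR, hBR, hCR, ht0, ht1]
          have hc2R : (m:ℝ)*A < C := by
            nlinarith [mul_le_mul_of_nonneg_left hR1 hAR]
          have hc2 : m*A ≤ C - 1 := by
            have h' : m*A < C := by exact_mod_cast hc2R
            linarith [Int.lt_iff_add_one_le.mp h']
          have e1 : (D+1)*A ≤ (m+1)*B*A := mul_le_mul_of_nonneg_right hc4 hA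
          have e2 : ((m+1)*A - C)*B ≥ 0 := by nlinarith [e1, hd, hA1]
          have hc3 : C ≤ (m+1)*A := by nlinarith [e2, hB]
          have e3 : m*A*B ≤ (C-1)*B := mul_le_mul_of_nonneg_right hc2 (by linarith)
          have e4 : (D - m*B)*A ≥ 0 := by nlinarith [e3, hd, hB]
          have hc1 : m*B ≤ D := by nlinarith [e4, hA1]
          exact ⟨hc1, by linarith, hc3, by linarith⟩
      obtain ⟨hc1, hc2, hc3, hc4⟩ := hclaims
      -- one Gauss step on σ
      have hσ'mem := gauss_mem ⟨hσ0, hσ1⟩ hσi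
      set σ' := gaussMap σ with hσ'
      have hσ'eq : σ' = (((C - m*A : ℤ):ℝ)*t + ((D - m*B : ℤ):ℝ))/((A:ℝ)*t + B) := by
        rw [hσ', gaussMap, Int.fract, ← hm, hinv]
        rw [div_sub' (ne_of_gt he)]
        push_cast
        ring_nf
      have hdet' : (C - m*A)*B - (D - m*B)*A = 1 ∨ (C - m*A)*B - (D - m*B)*A = -1 := by
        have hkey : (C - m*A)*B - (D - m*B)*A = -(A*D - B*C) := by ring
        rcases hdet with hd | hd
        · right; rw [hkey, hd]
        · left; rw [hkey, hd]; ring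
      by_cases hB'0 : D - m*B = 0
      · -- terminal : σ' = t/(A t + 1)
        have hA'B : (C - m*A) * B = 1 := by
          rcases hdet' with h | h
          · rw [hB'0] at h; linarith
          · exfalso
            rw [hB'0] at h
            simp at h
            nlinarith
        have hA'1 : C - m*A = 1 := by nlinarith
        have hB1 : B = 1 := by nlinarith
        have hσ'eq2 : σ' = t/((A:ℝ)*t + 1) := by
          rw [hσ'eq, hA'1, hB'0, hB1]
          push_cast
          ring_nf
        have hσ'pos : 0 < σ' := hσ'mem.1.1
        have htne : t ≠ 0 := ne_of_gt ht0
        have heA : (0:ℝ) < (A:ℝ)*t + 1 := by nlinarith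
        have hinv' : 1/σ' = (A:ℝ) + 1/t := by
          rw [hσ'eq2, one_div_div]
          field_simp
        refine ⟨2, 1, ?_⟩
        have h2 : gaussMap^[2] σ = gaussMap σ' := by
          rw [show (2:ℕ) = 1 + 1 from rfl, Function.iterate_add_apply]
          simp [hσ']
        rw [h2]
        simp only [Function.iterate_one]
        rw [gaussMap, hinv', gaussMap]
        exact Int.fract_intCast_add A (1/t)
      · -- recursive case
        have hB'1 : (1:ℤ) ≤ D - m*B := by
          rcases lt_or_eq_of_le (by linarith : (0:ℤ) ≤ D - m*B) with h | h
          · linarith [Int.lt_iff_add_one_le.mp h]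
          · exact absurd h.symm hB'0
        have hne : ¬(A = C ∧ B = D) := by
          rintro ⟨rfl, rfl⟩
          rcases hdet with hd | hd <;> nlinarith
        have hsum : A + B < C + D := by
          rcases lt_or_eq_of_le hAC with h | h
          · linarith
          · rcases lt_or_eq_of_le hBD with h' | h'
            · linarith
            · exact absurd ⟨h, h'⟩ hne
        have hmeas : (A + B).toNat ≤ s := by
          have h1 : (A + B).toNat < (C + D).toNat := by
            apply Int.toNat_lt_toNat ?_ |>.mpr hsum
            linarith
          omega
        obtain ⟨k, j, hkj⟩ := ih (C - m*A) (D - m*B) A B σ' t hmeas hσ'mem.2 hσ'mem.1 hti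
          ⟨ht0, ht1⟩ hdet' (by linarith) hB'1 (by linarith [hc3]) (by linarith [hc4]) hσ'eq
        refine ⟨k + 1, j, ?_⟩
        rw [show k + 1 = k + 1 from rfl, Function.iterate_add_apply]
        simpa [hσ'] using hkj

lemma conv_lin_lb {ρ : ℝ} (hρ : ρ ∈ Set.Ioo (0:ℝ) 1) (hρi : Irrational ρ) (w z : ℤ) (n : ℕ) :
    (cD ρ n : ℝ) * ((w:ℝ)*ρ + z) - |(w:ℝ)| ≤ ((w * cB ρ n + z * cD ρ n : ℤ) : ℝ) := by
  have herr := conv_err hρ hρi n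
  have h1 : ((w * cB ρ n + z * cD ρ n : ℤ):ℝ)
      = (cD ρ n : ℝ)*((w:ℝ)*ρ + z) + (w:ℝ)*((cB ρ n:ℝ) - (cD ρ n : ℝ)*ρ) := by
    push_cast; ring
  have h2 : |(w:ℝ)*((cB ρ n:ℝ) - (cD ρ n:ℝ)*ρ)| ≤ |(w:ℝ)| := by
    rw [abs_mul, abs_sub_comm]
    exact mul_le_of_le_one_right (abs_nonneg _) herr
  have h3 := neg_abs_le ((w:ℝ)*((cB ρ n:ℝ) - (cD ρ n:ℝ)*ρ))
  linarith

lemma cD_ge {ρ : ℝ} (hρ : ρ ∈ Set.Ioo (0:ℝ) 1) (hρi : Irrational ρ) (T : ℝ) :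
    ∃ n : ℕ, T ≤ (cD ρ n : ℝ) ∧ T ≤ (cD ρ (n+1) : ℝ) := by
  obtain ⟨m, hm⟩ := exists_nat_gt T
  refine ⟨2*m, ?_, ?_⟩
  · have h := cD_growth hρ hρi m
    have : ((m:ℝ) + 1) ≤ (cD ρ (2*m) : ℝ) := by exact_mod_cast h
    linarith
  · have h := cD_growth hρ hρi m
    have h1 : ((m:ℝ) + 1) ≤ (cD ρ (2*m) : ℝ) := by exact_mod_cast h
    have h2 : (cD ρ (2*m) : ℝ) ≤ (cD ρ (2*m+1) : ℝ) := by
      exact_mod_cast cD_mono hρ hρi (2*m)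
    linarith

lemma backward_core {σ ρ : ℝ} (hσ : σ ∈ Set.Ioo (0:ℝ) 1) (hρ : ρ ∈ Set.Ioo (0:ℝ) 1)
    (hσi : Irrational σ) (hρi : Irrational ρ) (ι lam μ ν : ℤ)
    (hdet : ι * ν - lam * μ = 1 ∨ ι * ν - lam * μ = -1)
    (hβ : 0 < (μ:ℝ) * ρ + (ν:ℝ))
    (heq : σ = ((ι:ℝ) * ρ + (lam:ℝ)) / ((μ:ℝ) * ρ + (ν:ℝ))) :
    ∃ k j : ℕ, gaussMap^[k] σ = gaussMap^[j] ρ := by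
  obtain ⟨hσ0, hσ1⟩ := hσ
  obtain ⟨hρ0, hρ1⟩ := hρ
  set α := (ι:ℝ) * ρ + lam with hαdef
  set β := (μ:ℝ) * ρ + ν with hβdef
  have hαβ : α = σ * β := (div_eq_iff (ne_of_gt hβ)).mp heq.symm
  have hα : 0 < α := by rw [hαβ]; exact mul_pos hσ0 hβ
  have hγ : 0 < β - α := by
    rw [hαβ]
    nlinarith
  set T : ℝ := max ((1 + |(ι:ℝ)|)/α) ((1 + |((μ - ι : ℤ):ℝ)|)/(β - α)) with hT
  obtain ⟨n, hdn, hdn1⟩ := cD_ge ⟨hρ0, hρ1⟩ hρi T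
  -- abbreviations
  set A := ι * cB ρ n + lam * cD ρ n with hA
  set B := ι * cB ρ (n+1) + lam * cD ρ (n+1) with hB
  set C := μ * cB ρ n + ν * cD ρ n with hC
  set D := μ * cB ρ (n+1) + ν * cD ρ (n+1) with hD
  have bound1 : ∀ k : ℕ, T ≤ (cD ρ k : ℝ) →
      1 ≤ (ι * cB ρ k + lam * cD ρ k : ℤ) := by
    intro k hk
    have h1 := conv_lin_lb ⟨hρ0, hρ1⟩ hρi ι lam k
    have h2 : (1 + |(ι:ℝ)|) ≤ (cD ρ k : ℝ) * α := by
      rw [← div_le_iff₀ hα] at *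
      exact le_trans (le_max_left _ _) hk
    have : (1:ℝ) ≤ ((ι * cB ρ k + lam * cD ρ k : ℤ):ℝ) := by
      rw [hαdef] at h2
      linarith
    exact_mod_cast this
  have bound2 : ∀ k : ℕ, T ≤ (cD ρ k : ℝ) →
      (ι * cB ρ k + lam * cD ρ k : ℤ) ≤ (μ * cB ρ k + ν * cD ρ k : ℤ) := by
    intro k hk
    have h1 := conv_lin_lb ⟨hρ0, hρ1⟩ hρi (μ - ι) (ν - lam) k
    have h2 : (1 + |((μ - ι : ℤ):ℝ)|) ≤ (cD ρ k : ℝ) * (β - α) := by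
      rw [← div_le_iff₀ hγ] at *
      exact le_trans (le_max_right _ _) hk
    have h3 : ((μ - ι : ℤ):ℝ)*ρ + ((ν - lam : ℤ):ℝ) = β - α := by
      rw [hαdef, hβdef]; push_cast; ring
    rw [h3] at h1
    have h4 : (0:ℝ) ≤ (((μ - ι) * cB ρ k + (ν - lam) * cD ρ k : ℤ):ℝ) := by linarith
    have h5 : (0:ℤ) ≤ (μ - ι) * cB ρ k + (ν - lam) * cD ρ k := by exact_mod_cast h4
    nlinarith [h5]
  have hA1 : 1 ≤ A := bound1 n hdn
  have hB1 : 1 ≤ B := bound1 (n+1) hdn1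
  have hAC : A ≤ C := bound2 n hdn
  have hBD : B ≤ D := bound2 (n+1) hdn1
  -- determinant
  have hsub : cB ρ n * cD ρ (n+1) - cB ρ (n+1) * cD ρ n = 1 ∨
      cB ρ n * cD ρ (n+1) - cB ρ (n+1) * cD ρ n = -1 := by
    have h := conv_det (x := ρ) (n+1)
    rwa [cA_succ, cC_succ] at h
  have hdet' : A * D - B * C = 1 ∨ A * D - B * C = -1 := by
    rw [hA, hB, hC, hD]
    exact det_mul hdet hsub
  -- the equation
  obtain ⟨hpos, heqρ⟩ := conv_eq ⟨hρ0, hρ1⟩ hρi (n+1)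
  rw [cA_succ, cC_succ] at heqρ
  rw [cC_succ] at hpos
  set t := gaussMap^[n+1] ρ with ht
  have htmem := iter_mem ⟨hρ0, hρ1⟩ hρi (n+1)
  have hρ1' : (cB ρ n : ℝ) * t + (cB ρ (n+1) : ℝ)
      = ρ * ((cD ρ n : ℝ) * t + (cD ρ (n+1) : ℝ)) := (div_eq_iff (ne_of_gt hpos)).mp heqρ.symm
  have h1 : (A:ℝ)*t + (B:ℝ) = α * ((cD ρ n : ℝ) * t + (cD ρ (n+1) : ℝ)) := by
    rw [hA, hB, hαdef]
    push_cast
    linear_combination (ι:ℝ) * hρ1'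
  have h2 : (C:ℝ)*t + (D:ℝ) = β * ((cD ρ n : ℝ) * t + (cD ρ (n+1) : ℝ)) := by
    rw [hC, hD, hβdef]
    push_cast
    linear_combination (μ:ℝ) * hρ1'
  have heqσ : σ = ((A:ℝ)*t + (B:ℝ)) / ((C:ℝ)*t + (D:ℝ)) := by
    rw [h1, h2, mul_div_mul_right _ _ (ne_of_gt hpos)]
    exact heq
  obtain ⟨k, j, hkj⟩ := serret_key (C+D).toNat A B C D σ t le_rfl hσi ⟨hσ0, hσ1⟩
    htmem.2 htmem.1 hdet' (by linarith) hB1 hAC hBD heqσ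
  refine ⟨k, j + (n+1), ?_⟩
  rw [Function.iterate_add_apply]
  exact hkj

lemma backward_dir {σ ρ : ℝ} (hσ : σ ∈ Set.Ioo (0:ℝ) 1) (hρ : ρ ∈ Set.Ioo (0:ℝ) 1)
    (hσi : Irrational σ) (hρi : Irrational ρ)
    (h : ∃ ι lam μ ν : ℤ, (ι * ν - lam * μ = 1 ∨ ι * ν - lam * μ = -1) ∧
        (μ:ℝ) * ρ + (ν:ℝ) ≠ 0 ∧ σ = ((ι:ℝ) * ρ + (lam:ℝ)) / ((μ:ℝ) * ρ + (ν:ℝ))) :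
    ∃ p q : ℕ, ∀ n : ℕ, 1 ≤ n → cfq σ (p + n) = cfq ρ (q + n) := by
  obtain ⟨ι, lam, μ, ν, hdet, hden, heq⟩ := h
  have key : ∃ k j : ℕ, gaussMap^[k] σ = gaussMap^[j] ρ := by
    rcases lt_or_gt_of_ne hden with hneg | hpos
    · apply backward_core hσ hρ hσi hρi (-ι) (-lam) (-μ) (-ν)
      · rcases hdet with hd | hd
        · left; linarith
        · right; linarith
      · push_cast; linarith
      · have e1 : ((-ι : ℤ):ℝ) * ρ + ((-lam : ℤ):ℝ) = -((ι:ℝ) * ρ + (lam:ℝ)) := by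
          push_cast; ring
        have e2 : ((-μ : ℤ):ℝ) * ρ + ((-ν : ℤ):ℝ) = -((μ:ℝ) * ρ + (ν:ℝ)) := by
          push_cast; ring
        rw [e1, e2, neg_div_neg_eq]
        exact heq
    · exact backward_core hσ hρ hσi hρi ι lam μ ν hdet hpos heq
  obtain ⟨k, j, hkj⟩ := key
  refine ⟨k, j, fun n _ => ?_⟩
  rw [← cfq_shift σ k n, ← cfq_shift ρ j n, hkj]

/-- Two irrationals `σ, ρ ∈ (0,1)` have continued fraction expansions with the
same tail iff `σ = (ιρ + λ)/(μρ + ν)` for integers with `ιν − λμ = ±1`. -/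
theorem stmt2 (σ ρ : ℝ) (hσ : σ ∈ Set.Ioo (0:ℝ) 1) (hρ : ρ ∈ Set.Ioo (0:ℝ) 1)
    (hσi : Irrational σ) (hρi : Irrational ρ) :
    (∃ p q : ℕ, ∀ n : ℕ, 1 ≤ n → cfq σ (p + n) = cfq ρ (q + n)) ↔
      (∃ ι lam μ ν : ℤ, (ι * ν - lam * μ = 1 ∨ ι * ν - lam * μ = -1) ∧
        (μ:ℝ) * ρ + (ν:ℝ) ≠ 0 ∧ σ = ((ι:ℝ) * ρ + (lam:ℝ)) / ((μ:ℝ) * ρ + (ν:ℝ))) :=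
  ⟨forward_dir hσ hρ hσi hρi, backward_dir hσ hρ hσi hρi⟩
end

section
/- Suppose χ : ℝ/ℤ → ℂ is continuous, σ ∈ (0,1) is irrational, c = χ(0), f ∘ χ (t) = χ(t+σ), and Q_m is a sequence of positive integers with Q_m σ mod 1 → 0 at rate C₁ σ₀^m (i.e., dist(Q_m σ, ℤ) = C₁σ₀^m + o(σ₀^m) with C₁ > 0, 0 < σ₀ < 1), while |f^{Q_m}(c) − c| = C₂|α|^m + o(|α|^m) with C₂ > 0 and 0 < |α| < 1. If χ is κ-Hölder with κ ∈ (0,1), then κ ≤ log|α| / log σ₀. -/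
open Complex Filter

instance : Fact ((0:ℝ) < 1) := ⟨one_pos⟩

/-- Upper bound on the Hölder regularity of the conjugacy in terms of the
scaling exponents: if closest returns of the rotation scale like `C₁σ₀^m`
while closest returns of the orbit of `c = χ(0)` scale like `C₂|α|^m`, and
`χ` is `κ`-Hölder, then `κ ≤ log|α|/log σ₀`. -/
theorem stmt12 (f : ℂ → ℂ) (hfc : Continuous f)
    (χ : AddCircle (1:ℝ) → ℂ) (hχ : Continuous χ)
    (σ : ℝ) (hσ : σ ∈ Set.Ioo (0:ℝ) 1) (hirr : Irrational σ)
    (c : ℂ) (hc : c = χ 0)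
    (hconj : ∀ t : AddCircle (1:ℝ), f (χ t) = χ (t + (σ : AddCircle (1:ℝ))))
    (Q : ℕ → ℕ) (hQ : ∀ m, 0 < Q m)
    (C₁ C₂ σ₀ : ℝ) (hC₁ : 0 < C₁) (hC₂ : 0 < C₂)
    (hσ₀ : σ₀ ∈ Set.Ioo (0:ℝ) 1)
    (α : ℂ) (hα₀ : 0 < ‖α‖) (hα₁ : ‖α‖ < 1)
    (hrate1 : Tendsto
      (fun m : ℕ => |(Q m : ℝ) * σ - (round ((Q m : ℝ) * σ) : ℝ)| / σ₀ ^ m)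
      atTop (nhds C₁))
    (hrate2 : Tendsto
      (fun m : ℕ => ‖f^[Q m] c - c‖ / ‖α‖ ^ m)
      atTop (nhds C₂))
    (κ : ℝ) (hκ : κ ∈ Set.Ioo (0:ℝ) 1)
    (hHolder : ∃ C : ℝ, 0 < C ∧ ∀ t s : AddCircle (1:ℝ),
      ‖χ t - χ s‖ ≤ C * dist t s ^ κ) :
    κ ≤ Real.log ‖α‖ / Real.log σ₀ := by
  obtain ⟨C, hC, hH⟩ := hHolder
  obtain ⟨hσ₀0, hσ₀1⟩ := hσ₀
  -- iterate formula
  have hiter : ∀ n : ℕ, ∀ t : AddCircle (1:ℝ),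
      f^[n] (χ t) = χ (t + (((n : ℝ) * σ : ℝ) : AddCircle (1:ℝ))) := by
    intro n
    induction n with
    | zero => intro t; simp
    | succ n ih =>
      intro t
      rw [Function.iterate_succ_apply, hconj, ih]
      congr 1
      push_cast
      rw [add_assoc]
      congr 1
      rw [show ((n : ℝ) + 1) * σ = σ + (n : ℝ) * σ by ring, AddCircle.coe_add]
  -- distance bound for each m
  set v : ℕ → ℝ := fun m => |(Q m : ℝ) * σ - (round ((Q m : ℝ) * σ) : ℝ)| / σ₀ ^ m
  set u : ℕ → ℝ := fun m => ‖f^[Q m] c - c‖ / ‖α‖ ^ m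
  have hd : ∀ m, ‖f^[Q m] c - c‖
      ≤ C * |(Q m : ℝ) * σ - (round ((Q m : ℝ) * σ) : ℝ)| ^ κ := by
    intro m
    have h1 : f^[Q m] c = χ ((((Q m : ℝ) * σ : ℝ) : AddCircle (1:ℝ))) := by
      rw [hc, hiter, zero_add]
    have h2 := hH ((((Q m : ℝ) * σ : ℝ) : AddCircle (1:ℝ))) 0
    have hdist : dist ((((Q m : ℝ) * σ : ℝ) : AddCircle (1:ℝ))) 0
        = |(Q m : ℝ) * σ - (round ((Q m : ℝ) * σ) : ℝ)| := by
      rw [dist_zero_right, AddCircle.norm_eq]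
      simp
    rw [hdist] at h2
    rw [h1, hc]
    exact h2
  by_contra hcon
  push_neg at hcon
  have hlogσ₀ : Real.log σ₀ < 0 := Real.log_neg hσ₀0 hσ₀1
  have hκσ : κ * Real.log σ₀ < Real.log ‖α‖ := by
    rwa [div_lt_iff_of_neg hlogσ₀] at hcon
  have hpow : σ₀ ^ κ < ‖α‖ := by
    have h1 : σ₀ ^ κ = Real.exp (Real.log σ₀ * κ) := by
      rw [Real.rpow_def_of_pos hσ₀0]
    have h2 : ‖α‖ = Real.exp (Real.log ‖α‖) :=
      (Real.exp_log hα₀).symm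
    rw [h1, h2]
    exact Real.exp_lt_exp.mpr (by linarith [hκσ])
  set q : ℝ := σ₀ ^ κ / ‖α‖ with hq
  have hq0 : 0 ≤ q := div_nonneg (Real.rpow_nonneg hσ₀0.le κ) hα₀.le
  have hq1 : q < 1 := (div_lt_one hα₀).mpr hpow
  -- the key bound : u m ≤ C * (v m) ^ κ * q ^ m
  have hub : ∀ m, u m ≤ C * (v m) ^ κ * q ^ m := by
    intro m
    have hσm : (0:ℝ) < σ₀ ^ m := pow_pos hσ₀0 m
    have hαm : (0:ℝ) < ‖α‖ ^ m := pow_pos hα₀ m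
    have hdm : |(Q m : ℝ) * σ - (round ((Q m : ℝ) * σ) : ℝ)| = v m * σ₀ ^ m := by
      exact (div_mul_cancel₀ _ hσm.ne').symm
    have h3 : (v m * σ₀ ^ m) ^ κ = (v m) ^ κ * (σ₀ ^ κ) ^ m := by
      rw [Real.mul_rpow (by positivity) hσm.le, ← Real.rpow_natCast σ₀ m,
        ← Real.rpow_mul hσ₀0.le, mul_comm (m:ℝ) κ, Real.rpow_mul hσ₀0.le,
        Real.rpow_natCast]
    have h4 : ‖f^[Q m] c - c‖ ≤ C * ((v m) ^ κ * (σ₀ ^ κ) ^ m) := by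
      rw [← h3, ← hdm]; exact hd m
    have : u m = ‖f^[Q m] c - c‖ / ‖α‖ ^ m := rfl
    rw [this, div_le_iff₀ hαm]
    calc ‖f^[Q m] c - c‖ ≤ C * ((v m) ^ κ * (σ₀ ^ κ) ^ m) := h4
      _ = C * (v m) ^ κ * q ^ m * ‖α‖ ^ m := by
          rw [hq, div_pow]
          field_simp
  -- limit of the bound is 0
  have hlim : Tendsto (fun m => C * (v m) ^ κ * q ^ m) atTop (nhds 0) := by
    have h1 : Tendsto (fun m => (v m) ^ κ) atTop (nhds (C₁ ^ κ)) :=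
      hrate1.rpow_const (Or.inl hC₁.ne')
    have h2 : Tendsto (fun m : ℕ => q ^ m) atTop (nhds 0) :=
      tendsto_pow_atTop_nhds_zero_of_lt_one hq0 hq1
    have := ((tendsto_const_nhds (x := C)).mul h1).mul h2
    simpa using this
  have hu0 : Tendsto u atTop (nhds 0) := by
    refine squeeze_zero (fun m => ?_) hub hlim
    exact div_nonneg (norm_nonneg _) (pow_nonneg hα₀.le m)
  have : C₂ = 0 := tendsto_nhds_unique hrate2 hu0
  exact hC₂.ne' this
end
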